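/- Let f : ℝ → ℝ be a C¹ diffeomorphism fixing a point p, and suppose f is structurally stable in the sense that for every ε > 0 there is δ > 0 such that every C¹ diffeomorphism g with C¹-distance ρ₁(f,g) < δ is topologically conjugate to f via a homeomorphism h with |x - h(x)| < ε for all x. Then p is a hyperbolic fixed point, i.e., |f'(p)| ≠ 1. -/

import Mathlib

set_option maxHeartbeats 1000000
open Function Set Metric


private lemma sgn_pos_all {u : ℝ → ℝ} (hu : Continuous u) (hne : ∀ x, u x ≠ 0)
    {x₀ : ℝ} (h₀ : 0 < u x₀) : ∀ x, 0 < u x := by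
  intro x
  rcases lt_or_ge 0 (u x) with h | h
  · exact h
  · exfalso
    have h0 : (0:ℝ) ∈ Set.uIcc (u x) (u x₀) := by
      rw [Set.mem_uIcc]; left; exact ⟨h, h₀.le⟩
    obtain ⟨y, -, hy⟩ := intermediate_value_uIcc (a := x) (b := x₀) hu.continuousOn h0
    exact hne y hy

private lemma mono_of_sign {g : ℝ → ℝ} {s : ℝ} (hs : s = 1 ∨ s = -1)
    (h : ∀ x, 0 < s * deriv g x) : StrictMono g ∨ StrictAnti g := by
  rcases hs with rfl | rfl
  · exact Or.inl (strictMono_of_deriv_pos fun x => by have := h x; linarith)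
  · exact Or.inr (strictAnti_of_deriv_neg fun x => by have := h x; linarith)

private lemma surj_outside {f g : ℝ → ℝ} (hg : Continuous g)
    (hfm : StrictMono f ∨ StrictAnti f) (hfs : Function.Surjective f)
    {k₁ k₂ : ℝ} (heq : ∀ x, x ∉ Set.Icc k₁ k₂ → g x = f x) :
    Function.Surjective g := by
  intro y
  obtain ⟨w, hw⟩ := hfs y
  by_cases hwK : w ∈ Set.Icc k₁ k₂
  · have h1 : g (k₁ - 1) = f (k₁ - 1) := heq _ (by rw [Set.mem_Icc]; push_neg; intro h; linarith)
    have h2 : g (k₂ + 1) = f (k₂ + 1) := heq _ (by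
      rw [Set.mem_Icc]; push_neg; intro h; linarith)
    have hw1 : k₁ - 1 ≤ w := by have := hwK.1; linarith
    have hw2 : w ≤ k₂ + 1 := by have := hwK.2; linarith
    have hy : y ∈ Set.uIcc (g (k₁ - 1)) (g (k₂ + 1)) := by
      rw [h1, h2, Set.mem_uIcc, ← hw]
      rcases hfm with hm | ha
      · exact Or.inl ⟨hm.monotone hw1, hm.monotone hw2⟩
      · exact Or.inr ⟨ha.antitone hw2, ha.antitone hw1⟩
    obtain ⟨x, -, hx⟩ := intermediate_value_uIcc (a := k₁ - 1) (b := k₂ + 1) hg.continuousOn hy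
    exact ⟨x, hx⟩
  · exact ⟨w, (heq w hwK).trans hw⟩

private lemma exists_inverse {g : ℝ → ℝ} (hg : ContDiff ℝ 1 g)
    (hd : ∀ x, deriv g x ≠ 0) (hm : StrictMono g ∨ StrictAnti g)
    (hsurj : Function.Surjective g) :
    ∃ gi : ℝ → ℝ, ContDiff ℝ 1 gi ∧ Function.LeftInverse gi g ∧
      Function.RightInverse gi g := by
  have hex : ∃ gi : ℝ → ℝ, Continuous gi ∧ Function.LeftInverse gi g ∧
      Function.RightInverse gi g := by
    rcases hm with hmono | hanti
    · let e := StrictMono.orderIsoOfSurjective g hmono hsurj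
      have hcont : Continuous (⇑e.symm) := by
        have := e.toHomeomorph.symm.continuous
        rwa [OrderIso.coe_toHomeomorph_symm] at this
      refine ⟨⇑e.symm, hcont, ?_, ?_⟩
      · intro x; exact StrictMono.orderIsoOfSurjective_symm_apply_self g hmono hsurj x
      · intro y; exact StrictMono.orderIsoOfSurjective_self_symm_apply g hmono hsurj y
    · set G : ℝ → ℝ := fun x => g (-x) with hG
      have hGm : StrictMono G := fun x y hxy => hanti (neg_lt_neg hxy)
      have hGs : Function.Surjective G := by
        intro y; obtain ⟨x, hx⟩ := hsurj y; exact ⟨-x, by simpa [hG] using hx⟩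
      let e := StrictMono.orderIsoOfSurjective G hGm hGs
      have hcont : Continuous (⇑e.symm) := by
        have := e.toHomeomorph.symm.continuous
        rwa [OrderIso.coe_toHomeomorph_symm] at this
      refine ⟨fun y => -(e.symm y), hcont.neg, ?_, ?_⟩
      · intro x
        have : e.symm (G (-x)) = -x := StrictMono.orderIsoOfSurjective_symm_apply_self G hGm hGs (-x)
        simp only [hG, neg_neg] at this
        show -(e.symm (g x)) = x
        rw [this, neg_neg]
      · intro y
        have : G (e.symm y) = y := StrictMono.orderIsoOfSurjective_self_symm_apply G hGm hGs y
        show g (-(e.symm y)) = y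
        simpa [hG] using this
  obtain ⟨gi, hgic, hgl, hgr⟩ := hex
  have key : ∀ a, HasDerivAt gi (deriv g (gi a))⁻¹ a := fun a =>
    HasDerivAt.of_local_left_inverse hgic.continuousAt
      ((hg.differentiable one_ne_zero (gi a)).hasDerivAt) (hd _)
      (Filter.Eventually.of_forall hgr)
  refine ⟨gi, ?_, hgl, hgr⟩
  rw [contDiff_one_iff_deriv]
  refine ⟨fun a => (key a).differentiableAt, ?_⟩
  have hde : deriv gi = fun a => (deriv g (gi a))⁻¹ := funext fun a => (key a).deriv
  rw [hde]
  exact ((hg.continuous_deriv le_rfl).comp hgic).inv₀ fun a => hd _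

private lemma inv_close {f finv : ℝ → ℝ} (hf : ContDiff ℝ 1 f) (hfinv : ContDiff ℝ 1 finv)
    (hli : Function.LeftInverse finv f) {k₁ k₂ : ℝ} (hk : k₁ ≤ k₂) :
    ∃ M > 0, ∀ g gi : ℝ → ℝ, Function.RightInverse gi g →
      (∀ x, x ∉ Set.Icc k₁ k₂ → g x = f x) →
      ∀ c : ℝ, 0 < c → c ≤ 1 → (∀ x, |g x - f x| ≤ c) →
      ∀ y, |finv y - gi y| ≤ M * c := by
  have hK : IsCompact (Set.Icc k₁ k₂) := isCompact_Icc
  have hne : (Set.Icc k₁ k₂).Nonempty := Set.nonempty_Icc.mpr hk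
  obtain ⟨z₁, hz₁K, hz₁⟩ := hK.exists_isMinOn hne hf.continuous.continuousOn
  obtain ⟨z₂, hz₂K, hz₂⟩ := hK.exists_isMaxOn hne hf.continuous.continuousOn
  have hz₁' : ∀ w ∈ Set.Icc k₁ k₂, f z₁ ≤ f w := fun w hw => hz₁ hw
  have hz₂' : ∀ w ∈ Set.Icc k₁ k₂, f w ≤ f z₂ := fun w hw => hz₂ hw
  have hLne : f z₁ - 1 ≤ f z₂ + 1 := by have := hz₁' z₂ hz₂K; linarith
  obtain ⟨w₀, hw₀L, hw₀⟩ := (isCompact_Icc (a := f z₁ - 1) (b := f z₂ + 1)).exists_isMaxOn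
    (Set.nonempty_Icc.mpr hLne) ((hfinv.continuous_deriv le_rfl).abs.continuousOn)
  have hw₀' : ∀ w ∈ Set.Icc (f z₁ - 1) (f z₂ + 1), |deriv finv w| ≤ |deriv finv w₀| :=
    fun w hw => hw₀ hw
  refine ⟨|deriv finv w₀| + 1, by positivity, ?_⟩
  intro g gi hgr heq c hc hc1 hgc y
  by_cases hx : gi y ∈ Set.Icc k₁ k₂
  · have hgx : g (gi y) = y := hgr y
    have h₁ : f (gi y) ∈ Set.Icc (f z₁ - 1) (f z₂ + 1) := by
      constructor
      · have := hz₁' _ hx; linarith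
      · have := hz₂' _ hx; linarith
    have h₂ : y ∈ Set.Icc (f z₁ - 1) (f z₂ + 1) := by
      have h3 := abs_le.mp (hgc (gi y))
      rw [hgx] at h3
      have := hz₁' _ hx; have := hz₂' _ hx
      constructor
      · have := h3.1; linarith
      · have := h3.2; linarith
    have mvt := Convex.norm_image_sub_le_of_norm_deriv_le
      (f := finv) (s := Set.Icc (f z₁ - 1) (f z₂ + 1)) (C := |deriv finv w₀| + 1)
      (fun w _ => (hfinv.differentiable one_ne_zero).differentiableAt)
      (fun w hw => by rw [Real.norm_eq_abs]; have := hw₀' w hw; linarith)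
      (convex_Icc _ _) h₁ h₂
    have hfix : finv (f (gi y)) = gi y := hli (gi y)
    rw [Real.norm_eq_abs, Real.norm_eq_abs, hfix] at mvt
    have hyc : |y - f (gi y)| ≤ c := by
      have h3 := hgc (gi y); rw [hgx] at h3; exact h3
    calc |finv y - gi y| ≤ (|deriv finv w₀| + 1) * |y - f (gi y)| := mvt
      _ ≤ (|deriv finv w₀| + 1) * c := by
          exact mul_le_mul_of_nonneg_left hyc (by positivity)
  · have h1 : g (gi y) = f (gi y) := heq _ hx
    have h2 : f (gi y) = y := by rw [← h1]; exact hgr y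
    have h3 : finv y = gi y := by rw [← hli (gi y), h2]
    rw [h3, sub_self, abs_zero]
    positivity

private lemma bump_package {x₀ : ℝ} (φ : ContDiffBump x₀) :
    ∃ B : ℝ, 0 ≤ B ∧ (∀ x, |deriv (⇑φ) x| ≤ B) ∧
      (∀ x, x ∉ Metric.closedBall x₀ φ.rOut → deriv (⇑φ) x = 0) ∧
      ContDiff ℝ 1 (⇑φ) := by
  have hcd : ContDiff ℝ 1 (⇑φ) := φ.contDiff
  have hcont : Continuous (deriv (⇑φ)) := hcd.continuous_deriv le_rfl
  have hcs : HasCompactSupport (deriv (⇑φ)) := φ.hasCompactSupport.deriv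
  obtain ⟨B, hB⟩ := hcont.bounded_above_of_compact_support hcs
  have hB' : ∀ x, |deriv (⇑φ) x| ≤ B := fun x => by
    have := hB x; rwa [Real.norm_eq_abs] at this
  refine ⟨B, le_trans (abs_nonneg _) (hB' x₀), hB', ?_, hcd⟩
  intro x hx
  by_contra h
  apply hx
  rw [← φ.tsupport_eq]
  exact support_deriv_subset (by simpa [Function.mem_support] using h)

private lemma perturb {f finv : ℝ → ℝ} (hf : ContDiff ℝ 1 f)
    (hri : Function.RightInverse finv f)
    {s : ℝ} (hs : s = 1 ∨ s = -1) (hfm : StrictMono f ∨ StrictAnti f)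
    {ψ : ℝ → ℝ} (hψ : ContDiff ℝ 1 ψ) {k₁ k₂ : ℝ}
    (hsupp : ∀ x, x ∉ Set.Icc k₁ k₂ → ψ x = 0)
    (hsign : ∀ x, 0 < s * (deriv f x + deriv ψ x)) :
    ∃ gi : ℝ → ℝ, ContDiff ℝ 1 (fun x => f x + ψ x) ∧ ContDiff ℝ 1 gi ∧
      Function.LeftInverse gi (fun x => f x + ψ x) ∧
      Function.RightInverse gi (fun x => f x + ψ x) ∧
      (∀ x, deriv (fun x => f x + ψ x) x = deriv f x + deriv ψ x) := by
  set g : ℝ → ℝ := fun x => f x + ψ x with hgdef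
  have hg : ContDiff ℝ 1 g := hf.add hψ
  have hgd : ∀ x, HasDerivAt g (deriv f x + deriv ψ x) x := fun x =>
    ((hf.differentiable one_ne_zero x).hasDerivAt).add ((hψ.differentiable one_ne_zero x).hasDerivAt)
  have hgderiv : ∀ x, deriv g x = deriv f x + deriv ψ x := fun x => (hgd x).deriv
  have hsign' : ∀ x, 0 < s * deriv g x := fun x => by rw [hgderiv x]; exact hsign x
  have hd : ∀ x, deriv g x ≠ 0 := by
    intro x h
    have h2 := hsign' x
    rw [h, mul_zero] at h2
    exact lt_irrefl _ h2
  have hm := mono_of_sign hs hsign'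
  have hsurj := surj_outside (k₁ := k₁) (k₂ := k₂) hg.continuous hfm hri.surjective
    (fun x hx => by simp [hgdef, hsupp x hx])
  obtain ⟨gi, h1, h2, h3⟩ := exists_inverse hg hd hm hsurj
  exact ⟨gi, hg, h1, h2, h3, hgderiv⟩
theorem stmt_18 (f finv : ℝ → ℝ) (p : ℝ)
    (hf : ContDiff ℝ 1 f) (hfinv : ContDiff ℝ 1 finv)
    (hli : Function.LeftInverse finv f) (hri : Function.RightInverse finv f)
    (hp : f p = p)
    (hstab : ∀ ε > (0 : ℝ), ∃ δ > (0 : ℝ), ∀ g ginv : ℝ → ℝ,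
      ContDiff ℝ 1 g → ContDiff ℝ 1 ginv →
      Function.LeftInverse ginv g → Function.RightInverse ginv g →
      (∃ c < δ, ∀ x y : ℝ,
        max |f x - g x| |finv x - ginv x| + |deriv f y - deriv g y| ≤ c) →
      ∃ h : ℝ ≃ₜ ℝ, (∀ x : ℝ, |x - h x| < ε) ∧ ∀ x : ℝ, h (f x) = g (h x)) :
    |deriv f p| ≠ 1 := by
  intro habs
  set s : ℝ := deriv f p with hs_def
  have hs : s = 1 ∨ s = -1 := (abs_eq (le_of_lt one_pos)).mp habs
  have hs1 : |s| = 1 := habs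
  have hss : s * s = 1 := by rcases hs with h | h <;> rw [h] <;> norm_num
  have hsne : s ≠ 0 := by rcases hs with h | h <;> rw [h] <;> norm_num
  have hfd : Differentiable ℝ f := hf.differentiable one_ne_zero
  have hfc : Continuous (deriv f) := hf.continuous_deriv le_rfl
  have hfinvd : Differentiable ℝ finv := hfinv.differentiable one_ne_zero
  have hchain : ∀ x, deriv finv (f x) * deriv f x = 1 := by
    intro x
    have h2 : HasDerivAt (finv ∘ f) (deriv finv (f x) * deriv f x) x :=
      ((hfinvd (f x)).hasDerivAt).comp x (hfd x).hasDerivAt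
    have h3 : (finv ∘ f) = id := funext hli
    rw [h3] at h2
    have h4 := h2.deriv
    rw [deriv_id'] at h4
    exact h4.symm
  have hne : ∀ x, deriv f x ≠ 0 := fun x h => by
    have := hchain x; rw [h, mul_zero] at this; exact zero_ne_one this
  have hsignf : ∀ x, 0 < s * deriv f x := by
    apply sgn_pos_all (continuous_const.mul hfc) (fun x => mul_ne_zero hsne (hne x)) (x₀ := p)
    show 0 < s * deriv f p; rw [← hs_def]; nlinarith [hss]
  have hfm : StrictMono f ∨ StrictAnti f := mono_of_sign hs hsignf
  -- base bump
  set φ0 : ContDiffBump (0:ℝ) := ⟨1, 2, one_pos, one_lt_two⟩ with hφ0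
  obtain ⟨B, hB0, hB, hBout, hφ0c1⟩ := bump_package φ0
  obtain ⟨M₁, hM₁pos, hM₁⟩ := inv_close hf hfinv hli (show p - 2 ≤ p + 2 by linarith)
  obtain ⟨δ₁, hδ₁, H₁⟩ := hstab 1 one_pos
  set D : ℝ := 2*(1+M₁) + 2*B + 2 with hD
  have hDpos : 0 < D := by nlinarith
  set κ : ℝ := min (δ₁/D) (1/(2*B+4)) with hκdef
  have hκpos : 0 < κ := lt_min (div_pos hδ₁ hDpos) (by positivity)
  have hκ1 : κ ≤ 1/(2*B+4) := min_le_right _ _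
  have hκδ : κ * D ≤ δ₁ := by
    have h2 : κ ≤ δ₁/D := min_le_left _ _
    calc κ * D ≤ (δ₁/D) * D := by nlinarith
      _ = δ₁ := by field_simp
  have hκhalf : κ ≤ 1/4 := by
    have h2 : (1:ℝ)/(2*B+4) ≤ 1/4 := one_div_le_one_div_of_le (by norm_num) (by linarith)
    linarith [hκ1]
  obtain ⟨ρ, hρpos, hρ⟩ : ∃ ρ > (0:ℝ), ∀ x, |x - p| ≤ ρ → |deriv f x - s| ≤ κ := by
    obtain ⟨ρ', hρ'pos, hρ'⟩ := Metric.continuousAt_iff.mp hfc.continuousAt κ hκpos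
    refine ⟨ρ'/2, by linarith, fun x hx => ?_⟩
    have h2 := hρ' (show dist x p < ρ' by rw [Real.dist_eq]; linarith)
    rw [Real.dist_eq, ← hs_def] at h2
    exact h2.le
  set σ : ℝ := min (ρ/2) 1 with hσdef
  have hσpos : 0 < σ := lt_min (by linarith) one_pos
  have hσ1 : σ ≤ 1 := min_le_right _ _
  have hσρ : 2*σ ≤ ρ := by
    have := min_le_left (ρ/2) 1; rw [← hσdef] at this; linarith
  have hη : ∀ x, |x - p| ≤ 2*σ → |deriv f x - s| ≤ κ := fun x hx => hρ x (le_trans hx hσρ)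
  -- the flattening perturbation
  set ι : ℝ → ℝ := fun x => (x - p)/σ with hι
  set χ : ℝ → ℝ := fun x => φ0 (ι x) with hχ
  set u : ℝ → ℝ := fun x => f x - (p + s*(x - p)) with hu
  set ψ₁ : ℝ → ℝ := fun x => -(χ x * u x) with hψ₁
  have hι1 : ContDiff ℝ 1 ι := (contDiff_id.sub contDiff_const).div_const σ
  have hχ1 : ContDiff ℝ 1 χ := hφ0c1.comp hι1
  have hu1 : ContDiff ℝ 1 u :=
    hf.sub (contDiff_const.add (contDiff_const.mul (contDiff_id.sub contDiff_const)))
  have hψ₁1 : ContDiff ℝ 1 ψ₁ := (hχ1.mul hu1).neg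
  have hιd : ∀ x, HasDerivAt ι (1/σ) x := fun x => by
    simpa using ((hasDerivAt_id x).sub_const p).div_const σ
  have hχd : ∀ x, HasDerivAt χ (deriv (⇑φ0) (ι x) * (1/σ)) x := fun x =>
    ((hφ0c1.differentiable one_ne_zero (ι x)).hasDerivAt).comp x (hιd x)
  have hud : ∀ x, HasDerivAt u (deriv f x - s) x := fun x => by
    have h2 : HasDerivAt (fun x => p + s*(x - p)) s x := by
      simpa using (((hasDerivAt_id x).sub_const p).const_mul s).const_add p
    exact ((hfd x).hasDerivAt).sub h2
  have hψ₁d : ∀ x, HasDerivAt ψ₁ (-((deriv (⇑φ0) (ι x) * (1/σ)) * u x + χ x * (deriv f x - s))) x :=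
    fun x => ((hχd x).mul (hud x)).neg
  have hψ₁deriv : ∀ x,
      deriv ψ₁ x = -((deriv (⇑φ0) (ι x) * (1/σ)) * u x + χ x * (deriv f x - s)) :=
    fun x => (hψ₁d x).deriv
  have hχ0 : ∀ x, 0 ≤ χ x := fun x => φ0.nonneg
  have hχle1 : ∀ x, χ x ≤ 1 := fun x => φ0.le_one
  have hχone : ∀ x, |x - p| ≤ σ → χ x = 1 := by
    intro x hx
    apply φ0.one_of_mem_closedBall
    rw [Metric.mem_closedBall, Real.dist_eq, sub_zero, hι]
    show |(x - p)/σ| ≤ 1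
    rw [abs_div, abs_of_pos hσpos, div_le_one hσpos]
    simpa using hx
  have hiout : ∀ x, ¬(|x - p| ≤ 2*σ) → ¬(|ι x| ≤ 2) := by
    intro x hx h2
    apply hx
    rw [hι] at h2
    show |x - p| ≤ 2*σ
    rw [abs_div, abs_of_pos hσpos, div_le_iff₀ hσpos] at h2
    linarith
  have hχzero : ∀ x, ¬(|x - p| ≤ 2*σ) → χ x = 0 := by
    intro x hx
    have h2 : ι x ∉ Function.support ⇑φ0 := by
      rw [φ0.support_eq, Metric.mem_ball, Real.dist_eq, sub_zero]
      intro h3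
      exact hiout x hx h3.le
    simpa [Function.mem_support, not_not] using h2
  have hχ'zero : ∀ x, ¬(|x - p| ≤ 2*σ) → deriv (⇑φ0) (ι x) = 0 := by
    intro x hx
    apply hBout
    rw [Metric.mem_closedBall, Real.dist_eq, sub_zero]
    exact hiout x hx
  have hup : u p = 0 := by rw [hu]; simp [hp]
  have husmall : ∀ x, |x - p| ≤ 2*σ → |u x| ≤ κ * (2*σ) := by
    intro x hx
    have hmem : ∀ w : ℝ, |w - p| ≤ 2*σ → w ∈ Set.Icc (p - 2*σ) (p + 2*σ) := by
      intro w hw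
      have := abs_le.mp hw
      exact ⟨by linarith [this.1], by linarith [this.2]⟩
    have h3 := Convex.norm_image_sub_le_of_norm_hasDerivWithin_le
      (f := u) (f' := fun w => deriv f w - s) (s := Set.Icc (p - 2*σ) (p + 2*σ)) (C := κ)
      (fun w _ => (hud w).hasDerivWithinAt)
      (fun w hw => by
        rw [Real.norm_eq_abs]
        apply hη
        have := hw.1; have := hw.2
        rw [abs_le]; constructor <;> linarith)
      (convex_Icc _ _) (hmem p (by simpa using le_of_lt (by positivity : (0:ℝ) < 2*σ)))
      (hmem x hx)
    rw [hup, sub_zero, Real.norm_eq_abs, Real.norm_eq_abs] at h3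
    calc |u x| ≤ κ * |x - p| := h3
      _ ≤ κ * (2*σ) := by nlinarith [abs_nonneg (x - p)]
  have hψ₁bound : ∀ x, |ψ₁ x| ≤ κ * (2*σ) := by
    intro x
    by_cases hx : |x - p| ≤ 2*σ
    · rw [hψ₁]
      show |(-(χ x * u x))| ≤ κ * (2*σ)
      rw [abs_neg, abs_mul]
      calc |χ x| * |u x| ≤ 1 * (κ * (2*σ)) := by
            apply mul_le_mul _ (husmall x hx) (abs_nonneg _) one_pos.le
            rw [abs_of_nonneg (hχ0 x)]; exact hχle1 x
        _ = κ * (2*σ) := one_mul _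
    · rw [hψ₁]
      show |(-(χ x * u x))| ≤ κ * (2*σ)
      rw [hχzero x hx]
      simp
      positivity
  have hψ₁dbound : ∀ x, |deriv ψ₁ x| ≤ (2*B + 1) * κ := by
    intro x
    rw [hψ₁deriv x, abs_neg]
    by_cases hx : |x - p| ≤ 2*σ
    · have e1 : |deriv (⇑φ0) (ι x) * (1/σ) * u x| ≤ (B * (1/σ)) * (κ * (2*σ)) := by
        rw [abs_mul, abs_mul]
        apply mul_le_mul _ (husmall x hx) (abs_nonneg _) (by positivity)
        apply mul_le_mul (hB _) _ (abs_nonneg _) hB0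
        rw [abs_of_pos (by positivity : (0:ℝ) < 1/σ)]
      have e2 : |χ x * (deriv f x - s)| ≤ 1 * κ := by
        rw [abs_mul]
        apply mul_le_mul _ (hη x hx) (abs_nonneg _) one_pos.le
        rw [abs_of_nonneg (hχ0 x)]; exact hχle1 x
      have e3 : (B * (1/σ)) * (κ * (2*σ)) = 2*B*κ := by field_simp
      calc |deriv (⇑φ0) (ι x) * (1/σ) * u x + χ x * (deriv f x - s)|
          ≤ |deriv (⇑φ0) (ι x) * (1/σ) * u x| + |χ x * (deriv f x - s)| := abs_add_le _ _
        _ ≤ (B * (1/σ)) * (κ * (2*σ)) + 1 * κ := add_le_add e1 e2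
        _ = (2*B + 1) * κ := by rw [e3]; ring
    · rw [hχ'zero x hx, hχzero x hx]
      simp
      positivity
  have hψ₁supp : ∀ x, x ∉ Set.Icc (p - 2) (p + 2) → ψ₁ x = 0 := by
    intro x hx
    have h2 : ¬(|x - p| ≤ 2*σ) := by
      intro h3
      apply hx
      have := abs_le.mp h3
      exact ⟨by nlinarith [this.1], by nlinarith [this.2]⟩
    rw [hψ₁]
    show -(χ x * u x) = 0
    rw [hχzero x h2]; ring
  have hsigng : ∀ x, 0 < s * (deriv f x + deriv ψ₁ x) := by
    intro x
    by_cases hx : |x - p| ≤ 2*σ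
    · have h2 := hη x hx
      have h4 := hψ₁dbound x
      have h5 : s * deriv f x ≥ 1 - κ := by
        have e : s * deriv f x = 1 + s * (deriv f x - s) := by nlinarith [hss]
        have e2 : |s * (deriv f x - s)| ≤ κ := by
          rw [abs_mul, hs1, one_mul]; exact h2
        have := abs_le.mp e2
        nlinarith [this.1]
      have h6 : |s * deriv ψ₁ x| ≤ (2*B+1) * κ := by
        rw [abs_mul, hs1, one_mul]; exact h4
      have h7 := (abs_le.mp h6).1
      have h8 : (2*B+2) * κ ≤ (2*B+2) * (1/(2*B+4)) := by nlinarith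
      have h9 : (2*B+2) * (1/(2*B+4)) < 1 := by
        rw [mul_one_div, div_lt_one (by linarith)]; linarith
      nlinarith [mul_add s (deriv f x) (deriv ψ₁ x)]
    · have h2 : deriv ψ₁ x = 0 := by
        rw [hψ₁deriv x, hχ'zero x hx, hχzero x hx]; ring
      rw [h2, add_zero]
      exact hsignf x
  obtain ⟨gi, hgC, hgiC, hgl, hgr, hgderiv⟩ := perturb hf hri hs hfm hψ₁1 hψ₁supp hsigng
  set g : ℝ → ℝ := fun x => f x + ψ₁ x with hgdef
  -- size bounds for hstab
  have hgminusf : ∀ x, |g x - f x| ≤ κ * (2*σ) := fun x => by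
    have h2 := hψ₁bound x
    rw [hgdef]
    show |f x + ψ₁ x - f x| ≤ κ * (2*σ)
    rw [show f x + ψ₁ x - f x = ψ₁ x from by ring]
    exact h2
  have hc0pos : 0 < κ * (2*σ) := by positivity
  have hc0le1 : κ * (2*σ) ≤ 1 := by nlinarith [hκhalf, hσ1, hκpos, hσpos]
  have hficlose := hM₁ g gi hgr
    (fun x hx => by
      rw [hgdef]; show f x + ψ₁ x = f x; rw [hψ₁supp x hx]; ring)
    (κ*(2*σ)) hc0pos hc0le1 hgminusf
  have hsize : ∃ c' < δ₁, ∀ x y : ℝ,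
      max |f x - g x| |finv x - gi x| + |deriv f y - deriv g y| ≤ c' := by
    refine ⟨κ * (D - 1), by nlinarith [hκpos, hκδ], ?_⟩
    intro x y
    have e1 : |f x - g x| ≤ κ*(2*σ) := by rw [abs_sub_comm]; exact hgminusf x
    have e2 : |finv x - gi x| ≤ M₁ * (κ*(2*σ)) := hficlose x
    have e3 : |deriv f y - deriv g y| ≤ (2*B+1)*κ := by
      rw [hgderiv y,
        show deriv f y - (deriv f y + deriv ψ₁ y) = -(deriv ψ₁ y) from by ring, abs_neg]
      exact hψ₁dbound y
    have e5 : max |f x - g x| |finv x - gi x| ≤ κ*(2*σ)*(1+M₁) :=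
      max_le (by nlinarith [hM₁pos, hc0pos]) (by nlinarith [hc0pos, hM₁pos])
    calc max |f x - g x| |finv x - gi x| + |deriv f y - deriv g y|
        ≤ κ*(2*σ)*(1+M₁) + (2*B+1)*κ := add_le_add e5 e3
      _ ≤ κ*(D-1) := by
          rw [hD]
          nlinarith [mul_nonneg hκpos.le (sub_nonneg.mpr hσ1), hM₁pos, hB0, hκpos,
            mul_nonneg (mul_nonneg hκpos.le (sub_nonneg.mpr hσ1)) hM₁pos.le]
  obtain ⟨h, hdisp, hconj⟩ := H₁ g gi hgC hgiC hgl hgr hsize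
  have hinj : ∀ x y : ℝ, h x = h y → x = y := fun x y e => by
    rw [← h.symm_apply_apply x, e, h.symm_apply_apply]
  have hgT : ∀ y, |y - p| ≤ σ → g y = p + s*(y - p) := by
    intro y hy
    rw [hgdef]
    show f y + ψ₁ y = p + s*(y-p)
    have e1 : ψ₁ y = -(χ y * u y) := rfl
    have e2 : u y = f y - (p + s*(y - p)) := rfl
    rw [e1, e2, hχone y hy]
    ring
  have hgg : ∀ y, |y - p| ≤ σ → g (g y) = y := by
    intro y hy
    have h2 := hgT y hy
    have h3 : |g y - p| ≤ σ := by
      rw [h2, show p + s*(y-p) - p = s*(y-p) from by ring, abs_mul, hs1, one_mul]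
      exact hy
    have h4 := hgT (g y) h3
    rw [h4, h2]
    linear_combination (y - p) * hss
  have hmemIcc : ∀ y : ℝ, y ∈ Set.Icc (p - σ) (p + σ) → |y - p| ≤ σ := by
    intro y hy; rw [abs_le]; exact ⟨by linarith [hy.1], by linarith [hy.2]⟩
  set α : ℝ := h.symm (p - σ) with hα
  set β : ℝ := h.symm (p + σ) with hβ
  have hαβ : α ≠ β := by
    intro e
    have e2 : (p - σ : ℝ) = p + σ := by
      have e3 := congrArg h e
      rwa [h.apply_symm_apply, h.apply_symm_apply] at e3
    linarith
  have hffix : ∀ t ∈ Set.uIcc α β, f (f t) = t := by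
    intro t ht
    obtain ⟨y, hy, hyt⟩ := intermediate_value_uIcc (a := (p - σ)) (b := (p + σ))
      (f := ⇑h.symm) h.symm.continuous.continuousOn ht
    have hy' : |y - p| ≤ σ := hmemIcc y
      (by rwa [Set.uIcc_of_le (by linarith : p - σ ≤ p + σ)] at hy)
    have hht : h t = y := by rw [← hyt, h.apply_symm_apply]
    have e1 : h (f (f t)) = g (g (h t)) := by rw [hconj (f t), hconj t]
    rw [hht, hgg y hy'] at e1
    exact hinj _ _ (e1.trans hht.symm)
  have hfix1 : s = 1 → ∀ t ∈ Set.uIcc α β, f t = t := by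
    intro hseq t ht
    obtain ⟨y, hy, hyt⟩ := intermediate_value_uIcc (a := (p - σ)) (b := (p + σ))
      (f := ⇑h.symm) h.symm.continuous.continuousOn ht
    have hy' : |y - p| ≤ σ := hmemIcc y
      (by rwa [Set.uIcc_of_le (by linarith : p - σ ≤ p + σ)] at hy)
    have hht : h t = y := by rw [← hyt, h.apply_symm_apply]
    have e1 : h (f t) = g (h t) := hconj t
    have e2 : g y = y := by rw [hgT y hy', hseq]; ring
    rw [hht, e2] at e1
    exact hinj _ _ (e1.trans hht.symm)
  set a : ℝ := min α β with ha
  set b : ℝ := max α β with hb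
  have hab : a < b := min_lt_max.mpr hαβ
  have hmemJ : ∀ t : ℝ, t ∈ Set.Icc a b → t ∈ Set.uIcc α β := by
    intro t ht
    rw [Set.mem_uIcc]
    rcases le_total α β with hc | hc
    · left
      constructor
      · have : a = α := min_eq_left hc
        rw [← this]; exact ht.1
      · have : b = β := max_eq_right hc
        rw [← this]; exact ht.2
    · right
      constructor
      · have : a = β := min_eq_right hc
        rw [← this]; exact ht.1
      · have : b = α := max_eq_left hc
        rw [← this]; exact ht.2
  rcases hs with hseq | hseq
  · -- s = 1 : f = id on [a,b]
    have hfixJ : ∀ t ∈ Set.Icc a b, f t = t := fun t ht => hfix1 hseq t (hmemJ t ht)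
    set L : ℝ := b - a with hL
    have hLpos : 0 < L := by rw [hL]; linarith
    set m : ℝ := (a + b)/2 with hm
    set φ2 : ContDiffBump m := ⟨L/8, L/4, by linarith, by linarith⟩ with hφ2
    obtain ⟨B₂, hB₂0, hB₂, hB₂out, hφ2c⟩ := bump_package φ2
    obtain ⟨M₂, hM₂pos, hM₂⟩ := inv_close hf hfinv hli (show m - L/4 ≤ m + L/4 by linarith)
    obtain ⟨z0, hz0K, hz0⟩ := (isCompact_Icc (a := m - L/4) (b := m + L/4)).exists_isMinOn
      (Set.nonempty_Icc.mpr (by linarith)) ((continuous_const.mul hfc).continuousOn)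
    have hz0' : ∀ w ∈ Set.Icc (m - L/4) (m + L/4), s * deriv f z0 ≤ s * deriv f w :=
      fun w hw => hz0 hw
    set m₀ : ℝ := s * deriv f z0 with hm₀
    have hm₀pos : 0 < m₀ := hsignf z0
    obtain ⟨δ₂, hδ₂, H₂⟩ := hstab (L/8) (by linarith)
    set c : ℝ := min (min (δ₂ / (M₂ + B₂ + 2)) (m₀/(B₂+1))) 1 with hc
    have hcpos : 0 < c := by
      apply lt_min (lt_min _ _) one_pos
      · positivity
      · positivity
    have hcle1 : c ≤ 1 := min_le_right _ _
    have hcleδ : c ≤ δ₂/(M₂+B₂+2) := le_trans (min_le_left _ _) (min_le_left _ _)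
    have hclem : c ≤ m₀/(B₂+1) := le_trans (min_le_left _ _) (min_le_right _ _)
    set ψ₂ : ℝ → ℝ := fun x => c * φ2 x with hψ₂
    have hψ₂1 : ContDiff ℝ 1 ψ₂ := contDiff_const.mul hφ2c
    have hψ₂d : ∀ x, HasDerivAt ψ₂ (c * deriv (⇑φ2) x) x := fun x =>
      ((hφ2c.differentiable one_ne_zero x).hasDerivAt).const_mul c
    have hψ₂deriv : ∀ x, deriv ψ₂ x = c * deriv (⇑φ2) x := fun x => (hψ₂d x).deriv
    have hballIcc : Metric.closedBall m (L/4) = Set.Icc (m - L/4) (m + L/4) :=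
      Real.closedBall_eq_Icc
    have hψ₂supp : ∀ x, x ∉ Set.Icc (m - L/4) (m + L/4) → ψ₂ x = 0 := by
      intro x hx
      have h2 : φ2 x = 0 := by
        have h3 : x ∉ Function.support ⇑φ2 := by
          rw [φ2.support_eq]
          intro h4
          exact hx (hballIcc ▸ Metric.ball_subset_closedBall h4)
        simpa [Function.mem_support, not_not] using h3
      rw [hψ₂]; show c * φ2 x = 0; rw [h2]; ring
    have hψ₂dzero : ∀ x, x ∉ Set.Icc (m - L/4) (m + L/4) → deriv (⇑φ2) x = 0 := by
      intro x hx
      exact hB₂out x (fun h4 => hx (hballIcc ▸ h4))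
    have hsigng₂ : ∀ x, 0 < s * (deriv f x + deriv ψ₂ x) := by
      intro x
      by_cases hx : x ∈ Set.Icc (m - L/4) (m + L/4)
      · have h2 := hz0' x hx
        have h3 : |s * deriv ψ₂ x| ≤ c * B₂ := by
          rw [abs_mul, hs1, one_mul, hψ₂deriv x, abs_mul, abs_of_pos hcpos]
          exact mul_le_mul_of_nonneg_left (hB₂ x) hcpos.le
        have h4 := (abs_le.mp h3).1
        have h5 : c * (B₂ + 1) ≤ m₀ := (le_div_iff₀ (by positivity)).mp hclem
        rw [mul_add]
        nlinarith
      · rw [hψ₂deriv x, hψ₂dzero x hx, mul_zero, add_zero]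
        exact hsignf x
    obtain ⟨gi₂, hg₂C, hgi₂C, hg₂l, hg₂r, hg₂deriv⟩ :=
      perturb hf hri (Or.inl hseq) hfm hψ₂1 hψ₂supp hsigng₂
    set g₂ : ℝ → ℝ := fun x => f x + ψ₂ x with hg₂def
    have hψ₂bound : ∀ x, |ψ₂ x| ≤ c := fun x => by
      rw [hψ₂]; show |c * φ2 x| ≤ c
      rw [abs_mul, abs_of_pos hcpos, abs_of_nonneg φ2.nonneg]
      nlinarith [φ2.le_one (x := x), hcpos]
    have hg₂minusf : ∀ x, |g₂ x - f x| ≤ c := fun x => by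
      rw [hg₂def]; show |f x + ψ₂ x - f x| ≤ c
      rw [show f x + ψ₂ x - f x = ψ₂ x from by ring]; exact hψ₂bound x
    have hficlose₂ := hM₂ g₂ gi₂ hg₂r
      (fun x hx => by rw [hg₂def]; show f x + ψ₂ x = f x; rw [hψ₂supp x hx]; ring)
      c hcpos hcle1 hg₂minusf
    have hsize₂ : ∃ c' < δ₂, ∀ x y : ℝ,
        max |f x - g₂ x| |finv x - gi₂ x| + |deriv f y - deriv g₂ y| ≤ c' := by
      refine ⟨c + M₂ * c + c * B₂, ?_, ?_⟩
      · have h6 : c * (M₂+B₂+2) ≤ δ₂ := (le_div_iff₀ (by positivity)).mp hcleδ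
        have h7 : c + M₂*c + c*B₂ = c*(M₂+B₂+2) - c := by ring
        rw [h7]
        linarith only [h6, hcpos]
      · intro x y
        have e1 : |f x - g₂ x| ≤ c := by rw [abs_sub_comm]; exact hg₂minusf x
        have e2 : |finv x - gi₂ x| ≤ M₂ * c := hficlose₂ x
        have e3 : |deriv f y - deriv g₂ y| ≤ c * B₂ := by
          rw [hg₂deriv y,
            show deriv f y - (deriv f y + deriv ψ₂ y) = -(deriv ψ₂ y) from by ring,
            abs_neg, hψ₂deriv y, abs_mul, abs_of_pos hcpos]
          exact mul_le_mul_of_nonneg_left (hB₂ y) hcpos.le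
        have hMc : 0 ≤ M₂ * c := mul_nonneg hM₂pos.le hcpos.le
        have e5 : max |f x - g₂ x| |finv x - gi₂ x| ≤ c + M₂ * c :=
          max_le (by linarith only [e1, hMc]) (by linarith only [e2, hcpos])
        calc max |f x - g₂ x| |finv x - gi₂ x| + |deriv f y - deriv g₂ y|
            ≤ (c + M₂ * c) + c * B₂ := add_le_add e5 e3
          _ = c + M₂ * c + c * B₂ := by ring
    obtain ⟨h₂, hdisp₂, hconj₂⟩ := H₂ g₂ gi₂ hg₂C hgi₂C hg₂l hg₂r hsize₂
    have hmJ : m ∈ Set.Icc a b :=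
      ⟨by rw [hm]; linarith only [hab], by rw [hm]; linarith only [hab]⟩
    have hfm' : f m = m := hfixJ m hmJ
    have e0 : h₂ m = g₂ (h₂ m) := by
      have e1 := hconj₂ m
      rwa [hfm'] at e1
    have hd2 : |m - h₂ m| < L/8 := hdisp₂ m
    have habs2 : |h₂ m - m| ≤ L/8 := by rw [abs_sub_comm]; exact hd2.le
    have h9 := abs_le.mp habs2
    have hball : h₂ m ∈ Metric.closedBall m (L/8) := by
      rw [Metric.mem_closedBall, Real.dist_eq]
      exact habs2
    have hφ2one : φ2 (h₂ m) = 1 := φ2.one_of_mem_closedBall hball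
    have hinJ : h₂ m ∈ Set.Icc a b := by
      have e6 : m = (a+b)/2 := hm
      have e7 : L = b - a := hL
      exact ⟨by linarith only [h9.1, e6, e7, hab], by linarith only [h9.2, e6, e7, hab]⟩
    have hfh : f (h₂ m) = h₂ m := hfixJ _ hinJ
    have hfinal : h₂ m = h₂ m + c := by
      calc h₂ m = g₂ (h₂ m) := e0
        _ = f (h₂ m) + c * φ2 (h₂ m) := rfl
        _ = h₂ m + c := by rw [hfh, hφ2one, mul_one]
    linarith only [hfinal, hcpos]
  · -- s = -1
    have hfa : StrictAnti f := strictAnti_of_deriv_neg (fun x => by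
      have h2 := hsignf x; rw [hseq] at h2; linarith only [h2])
    have hfixJ2 : ∀ t ∈ Set.Icc a b, f (f t) = t := fun t ht => hffix t (hmemJ t ht)
    obtain ⟨A1, B1, hAB, hsubJ, cap, hcappos, hesc⟩ :
        ∃ A1 B1 : ℝ, A1 < B1 ∧ Set.Icc A1 B1 ⊆ Set.Icc a b ∧ ∃ cap : ℝ, 0 < cap ∧
          ∀ z c' : ℝ, |z - (A1+B1)/2| ≤ (B1-A1)/8 → 0 < c' → c' ≤ cap →
            ¬ (|f z + c' - (A1+B1)/2| ≤ (B1-A1)/4) := by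
      by_cases hpb : p < b
      · set A1 : ℝ := max a ((p+b)/2) with hA1
        have hA1p : p < A1 := by
          have h2 : (p+b)/2 ≤ A1 := le_max_right _ _
          linarith only [h2, hpb]
        have hA1b : A1 < b := max_lt hab (by linarith only [hpb])
        refine ⟨A1, b, hA1b, Set.Icc_subset_Icc (le_max_left _ _) le_rfl, A1 - p,
          by linarith only [hA1p], ?_⟩
        intro z c' hz hc' hcap hcon
        have hz1 := (abs_le.mp hz).1
        have hzp : p < z := by linarith only [hz1, hA1p, hA1b]
        have hfz : f z < p := by
          have h3 := hfa hzp
          rwa [hp] at h3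
        have hcon1 := (abs_le.mp hcon).1
        linarith only [hz1, hfz, hcon1, hcap, hA1b]
      · push_neg at hpb
        refine ⟨a, b, hab, le_refl _, 1, one_pos, ?_⟩
        intro z c' hz hc' hcap hcon
        have hz2 := (abs_le.mp hz).2
        have hzp : z < p := by linarith only [hz2, hab, hpb]
        have hfz : p < f z := by
          have h3 := hfa hzp
          rwa [hp] at h3
        have hcon2 := (abs_le.mp hcon).2
        linarith only [hz2, hfz, hcon2, hc', hpb, hab]
    set L2 : ℝ := B1 - A1 with hL2
    have hL2pos : 0 < L2 := by rw [hL2]; linarith only [hAB]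
    set m2 : ℝ := (A1 + B1)/2 with hm2
    set φ2 : ContDiffBump m2 :=
      ⟨L2/8, L2/4, by linarith only [hL2pos, hL2], by linarith only [hL2pos, hL2]⟩ with hφ2
    obtain ⟨B₂, hB₂0, hB₂, hB₂out, hφ2c⟩ := bump_package φ2
    obtain ⟨M₂, hM₂pos, hM₂⟩ := inv_close hf hfinv hli
      (show m2 - L2/4 ≤ m2 + L2/4 by linarith only [hL2pos, hL2])
    obtain ⟨z0, hz0K, hz0⟩ := (isCompact_Icc (a := m2 - L2/4) (b := m2 + L2/4)).exists_isMinOn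
      (Set.nonempty_Icc.mpr (by linarith only [hL2pos, hL2])) ((continuous_const.mul hfc).continuousOn)
    have hz0' : ∀ w ∈ Set.Icc (m2 - L2/4) (m2 + L2/4), s * deriv f z0 ≤ s * deriv f w :=
      fun w hw => hz0 hw
    set m₀ : ℝ := s * deriv f z0 with hm₀
    have hm₀pos : 0 < m₀ := hsignf z0
    obtain ⟨δ₂, hδ₂, H₂⟩ := hstab (L2/8) (by linarith only [hL2pos, hL2])
    set c : ℝ := min (min (δ₂ / (M₂ + B₂ + 2)) (m₀/(B₂+1))) (min 1 cap) with hc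
    have hcpos : 0 < c :=
      lt_min (lt_min (by positivity) (by positivity)) (lt_min one_pos hcappos)
    have hcle1 : c ≤ 1 := le_trans (min_le_right _ _) (min_le_left _ _)
    have hclecap : c ≤ cap := le_trans (min_le_right _ _) (min_le_right _ _)
    have hcleδ : c ≤ δ₂/(M₂+B₂+2) := le_trans (min_le_left _ _) (min_le_left _ _)
    have hclem : c ≤ m₀/(B₂+1) := le_trans (min_le_left _ _) (min_le_right _ _)
    set ψ₂ : ℝ → ℝ := fun x => c * φ2 x with hψ₂
    have hψ₂1 : ContDiff ℝ 1 ψ₂ := contDiff_const.mul hφ2c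
    have hψ₂d : ∀ x, HasDerivAt ψ₂ (c * deriv (⇑φ2) x) x := fun x =>
      ((hφ2c.differentiable one_ne_zero x).hasDerivAt).const_mul c
    have hψ₂deriv : ∀ x, deriv ψ₂ x = c * deriv (⇑φ2) x := fun x => (hψ₂d x).deriv
    have hballIcc : Metric.closedBall m2 (L2/4) = Set.Icc (m2 - L2/4) (m2 + L2/4) :=
      Real.closedBall_eq_Icc
    have hψ₂supp : ∀ x, x ∉ Set.Icc (m2 - L2/4) (m2 + L2/4) → ψ₂ x = 0 := by
      intro x hx
      have h2 : φ2 x = 0 := by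
        have h3 : x ∉ Function.support ⇑φ2 := by
          rw [φ2.support_eq]
          intro h4
          exact hx (hballIcc ▸ Metric.ball_subset_closedBall h4)
        simpa [Function.mem_support, not_not] using h3
      rw [hψ₂]; show c * φ2 x = 0; rw [h2]; ring
    have hψ₂dzero : ∀ x, x ∉ Set.Icc (m2 - L2/4) (m2 + L2/4) → deriv (⇑φ2) x = 0 := by
      intro x hx
      exact hB₂out x (fun h4 => hx (hballIcc ▸ h4))
    have hsigng₂ : ∀ x, 0 < s * (deriv f x + deriv ψ₂ x) := by
      intro x
      by_cases hx : x ∈ Set.Icc (m2 - L2/4) (m2 + L2/4)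
      · have h2 := hz0' x hx
        have h3 : |s * deriv ψ₂ x| ≤ c * B₂ := by
          rw [abs_mul, hs1, one_mul, hψ₂deriv x, abs_mul, abs_of_pos hcpos]
          exact mul_le_mul_of_nonneg_left (hB₂ x) hcpos.le
        have h4 := (abs_le.mp h3).1
        have h5 : c * (B₂ + 1) ≤ m₀ := (le_div_iff₀ (by positivity)).mp hclem
        have h5' : c * B₂ + c ≤ m₀ := by
          rw [show c*B₂ + c = c*(B₂+1) from by ring]; exact h5
        rw [mul_add]
        linarith only [h2, h4, h5', hcpos]
      · rw [hψ₂deriv x, hψ₂dzero x hx, mul_zero, add_zero]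
        exact hsignf x
    obtain ⟨gi₂, hg₂C, hgi₂C, hg₂l, hg₂r, hg₂deriv⟩ :=
      perturb hf hri (Or.inr hseq) hfm hψ₂1 hψ₂supp hsigng₂
    set g₂ : ℝ → ℝ := fun x => f x + ψ₂ x with hg₂def
    have hψ₂bound : ∀ x, |ψ₂ x| ≤ c := fun x => by
      rw [hψ₂]; show |c * φ2 x| ≤ c
      rw [abs_mul, abs_of_pos hcpos, abs_of_nonneg φ2.nonneg]
      calc c * φ2 x ≤ c * 1 := mul_le_mul_of_nonneg_left φ2.le_one hcpos.le
        _ = c := mul_one c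
    have hg₂minusf : ∀ x, |g₂ x - f x| ≤ c := fun x => by
      rw [hg₂def]; show |f x + ψ₂ x - f x| ≤ c
      rw [show f x + ψ₂ x - f x = ψ₂ x from by ring]; exact hψ₂bound x
    have hficlose₂ := hM₂ g₂ gi₂ hg₂r
      (fun x hx => by rw [hg₂def]; show f x + ψ₂ x = f x; rw [hψ₂supp x hx]; ring)
      c hcpos hcle1 hg₂minusf
    have hsize₂ : ∃ c' < δ₂, ∀ x y : ℝ,
        max |f x - g₂ x| |finv x - gi₂ x| + |deriv f y - deriv g₂ y| ≤ c' := by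
      refine ⟨c + M₂ * c + c * B₂, ?_, ?_⟩
      · have h6 : c * (M₂+B₂+2) ≤ δ₂ := (le_div_iff₀ (by positivity)).mp hcleδ
        have h7 : c + M₂*c + c*B₂ = c*(M₂+B₂+2) - c := by ring
        rw [h7]
        linarith only [h6, hcpos]
      · intro x y
        have e1 : |f x - g₂ x| ≤ c := by rw [abs_sub_comm]; exact hg₂minusf x
        have e2 : |finv x - gi₂ x| ≤ M₂ * c := hficlose₂ x
        have e3 : |deriv f y - deriv g₂ y| ≤ c * B₂ := by
          rw [hg₂deriv y,
            show deriv f y - (deriv f y + deriv ψ₂ y) = -(deriv ψ₂ y) from by ring,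
            abs_neg, hψ₂deriv y, abs_mul, abs_of_pos hcpos]
          exact mul_le_mul_of_nonneg_left (hB₂ y) hcpos.le
        have hMc : 0 ≤ M₂ * c := mul_nonneg hM₂pos.le hcpos.le
        have e5 : max |f x - g₂ x| |finv x - gi₂ x| ≤ c + M₂ * c :=
          max_le (by linarith only [e1, hMc]) (by linarith only [e2, hcpos])
        calc max |f x - g₂ x| |finv x - gi₂ x| + |deriv f y - deriv g₂ y|
            ≤ (c + M₂ * c) + c * B₂ := add_le_add e5 e3
          _ = c + M₂ * c + c * B₂ := by ring
    obtain ⟨h₂, hdisp₂, hconj₂⟩ := H₂ g₂ gi₂ hg₂C hgi₂C hg₂l hg₂r hsize₂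
    have hm2J : m2 ∈ Set.Icc A1 B1 :=
      ⟨by rw [hm2]; linarith only [hAB], by rw [hm2]; linarith only [hAB]⟩
    have hffm2 : f (f m2) = m2 := hfixJ2 m2 (hsubJ hm2J)
    set z : ℝ := h₂ m2 with hzdef
    have hd2 : |m2 - z| < L2/8 := hdisp₂ m2
    have habs2 : |z - m2| ≤ L2/8 := by rw [abs_sub_comm]; exact hd2.le
    have hφ2z : φ2 z = 1 := φ2.one_of_mem_closedBall
      (by rw [Metric.mem_closedBall, Real.dist_eq]; exact habs2)
    have h9 := abs_le.mp habs2
    have hzJ : z ∈ Set.Icc A1 B1 := by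
      have e6 : m2 = (A1+B1)/2 := hm2
      have e7 : L2 = B1 - A1 := hL2
      exact ⟨by linarith only [h9.1, e6, e7, hAB], by linarith only [h9.2, e6, e7, hAB]⟩
    have hffz : f (f z) = z := hfixJ2 z (hsubJ hzJ)
    have hesc2 := hesc z c habs2 hcpos hclecap
    have hout : (f z + c) ∉ Set.Icc (m2 - L2/4) (m2 + L2/4) := by
      intro hmem
      apply hesc2
      rw [abs_le]
      exact ⟨by linarith only [hmem.1, hL2, hm2], by linarith only [hmem.2, hL2, hm2]⟩
    have hψ₂fz : ψ₂ (f z + c) = 0 := hψ₂supp _ hout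
    have e1 : h₂ (f (f m2)) = g₂ (g₂ (h₂ m2)) := by rw [hconj₂ (f m2), hconj₂ m2]
    rw [hffm2] at e1
    have e2 : g₂ z = f z + c := by
      show f z + ψ₂ z = f z + c
      show f z + c * φ2 z = f z + c
      rw [hφ2z, mul_one]
    have e3 : g₂ (g₂ z) = f (f z + c) := by
      rw [e2]
      show f (f z + c) + ψ₂ (f z + c) = f (f z + c)
      rw [hψ₂fz]; ring
    rw [e3] at e1
    have e4 : f (f z + c) = f (f z) := e1.symm.trans hffz.symm
    have e5 : f z + c = f z := hfa.injective e4
    linarith only [e5, hcpos]
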